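/- Let α ∈ (0,1) be irrational with continued fraction digits a_1, a_2, … and convergent denominators q_0, q_1, q_2, …. Let (b_i)_{i≥0} and (c_i)_{i≥0} be sequences of integers satisfying the Ostrowski digit conditions 0 ≤ b_0 < a_1, 0 ≤ b_i ≤ a_{i+1}, b_{i−1} = 0 whenever b_i = a_{i+1}, and likewise for (c_i); assume moreover that all c_i are even and c_i is nonzero for every even i, and that b_i < a_{i+1} for all i ≥ 1. For j ≥ 0 set N_j = Σ_{i=0}^j b_i q_i and C_j = Σ_{i=0}^j c_i q_i. Then for every integer ℓ ≥ 1: (i) the condition C_{ℓ−1} < N_{ℓ−1} ≤ N_ℓ < C_ℓ holds if and only if b_ℓ < c_ℓ and there exists an integer m < ℓ such that c_m < b_m and c_i = b_i for all m < i < ℓ; (ii) the condition N_{ℓ−1} ≤ C_{ℓ−1} ≤ C_ℓ < N_ℓ holds if and only if c_ℓ < b_ℓ and, in addition, either b_i = c_i for all i < ℓ, or there exists an integer m < ℓ such that b_m < c_m and b_i = c_i for all m < i < ℓ. -/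

import Mathlib

open scoped Classical

/-- Iterates of the Gauss map starting at `α`. -/
noncomputable def gaussIter (α : ℝ) : ℕ → ℝ
  | 0 => α
  | k + 1 => Int.fract (1 / gaussIter α k)

/-- For `α ∈ (0,1)` irrational, `cfDigit α i` is the `i`-th digit `a_i` (for `i ≥ 1`)
of the continued fraction expansion `α = [a_1, a_2, a_3, …]`. -/
noncomputable def cfDigit (α : ℝ) (i : ℕ) : ℕ :=
  (⌊1 / gaussIter α (i - 1)⌋).toNat

/-- The denominators `q_k` of the convergents of `α`. -/
noncomputable def qDen (α : ℝ) : ℕ → ℕ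
  | 0 => 1
  | 1 => cfDigit α 1
  | k + 2 => cfDigit α (k + 2) * qDen α (k + 1) + qDen α k

section Aux

lemma gauss_mem (α : ℝ) (hirr : Irrational α) (h0 : 0 < α) (h1 : α < 1) :
    ∀ k, Irrational (gaussIter α k) ∧ 0 < gaussIter α k ∧ gaussIter α k < 1 := by
  intro k
  induction k with
  | zero => exact ⟨hirr, h0, h1⟩
  | succ n ih =>
    obtain ⟨hi, hp, hl⟩ := ih
    have hinv : Irrational (1 / gaussIter α n) := by
      rw [one_div]; exact hi.inv
    have hfr : Irrational (Int.fract (1 / gaussIter α n)) := by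
      have := hinv.sub_intCast ⌊1 / gaussIter α n⌋
      rwa [Int.self_sub_floor] at this
    have hne : Int.fract (1 / gaussIter α n) ≠ 0 := hfr.ne_zero
    have hpos : 0 < Int.fract (1 / gaussIter α n) :=
      lt_of_le_of_ne (Int.fract_nonneg _) (Ne.symm hne)
    refine ⟨?_, ?_, ?_⟩ <;> simp only [gaussIter]
    · exact hfr
    · exact hpos
    · exact Int.fract_lt_one _

lemma cfDigit_pos (α : ℝ) (hirr : Irrational α) (h0 : 0 < α) (h1 : α < 1) :
    ∀ i, 1 ≤ i → 1 ≤ cfDigit α i := by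
  intro i hi
  obtain ⟨_, hp, hl⟩ := gauss_mem α hirr h0 h1 (i - 1)
  have h1lt : 1 < 1 / gaussIter α (i - 1) := by
    rw [lt_div_iff₀ hp]; linarith
  have : (1 : ℤ) ≤ ⌊1 / gaussIter α (i - 1)⌋ := by
    exact_mod_cast Int.le_floor.2 (by exact_mod_cast h1lt.le)
  unfold cfDigit
  omega

variable (a q : ℕ → ℕ)
  (hq0 : q 0 = 1) (hq1 : q 1 = a 1)
  (hqrec : ∀ k, q (k + 2) = a (k + 2) * q (k + 1) + q k)
  (ha : ∀ i, 1 ≤ i → 1 ≤ a i)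

include hq0 hq1 hqrec ha in
lemma qpos : ∀ k, 1 ≤ q k := by
  intro k
  induction k using Nat.strong_induction_on with
  | _ k ih =>
    match k with
    | 0 => omega
    | 1 => rw [hq1]; exact ha 1 le_rfl
    | (k + 2) =>
      rw [hqrec k]
      have := ih k (by omega)
      have := ih (k + 1) (by omega)
      have := ha (k + 2) (by omega)
      nlinarith

include hq0 hq1 hqrec ha in
lemma ostrowski_sum_lt (x : ℕ → ℕ) (hx0 : x 0 < a 1)
    (hxle : ∀ i, 1 ≤ i → x i ≤ a (i + 1))
    (hxc : ∀ i, 1 ≤ i → x i = a (i + 1) → x (i - 1) = 0) :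
    ∀ j, (∑ i ∈ Finset.range (j + 1), x i * q i) < q (j + 1) ∧
      (x j = 0 → (∑ i ∈ Finset.range (j + 1), x i * q i) < q j) := by
  intro j
  induction j with
  | zero =>
    constructor
    · simpa [hq0, hq1] using hx0
    · intro h; simp [h, hq0]
  | succ n ih =>
    have hsum : ∑ i ∈ Finset.range (n + 2), x i * q i
        = (∑ i ∈ Finset.range (n + 1), x i * q i) + x (n + 1) * q (n + 1) :=
      Finset.sum_range_succ _ _
    have hrec := hqrec n
    constructor
    · rw [hsum, hrec]
      rcases eq_or_lt_of_le (hxle (n + 1) (by omega)) with heq | hlt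
      · -- x (n+1) = a (n+2), carry: x n = 0
        have hx0' : x n = 0 := by
          have := hxc (n + 1) (by omega) heq
          simpa using this
        have h2 := ih.2 hx0'
        rw [heq]
        nlinarith
      · -- x (n+1) + 1 ≤ a (n+2)
        have h1 := ih.1
        have hqp := qpos a q hq0 hq1 hqrec ha n
        have : (x (n + 1) + 1) * q (n + 1) ≤ a (n + 2) * q (n + 1) :=
          Nat.mul_le_mul_right _ hlt
        nlinarith
    · intro h
      rw [hsum, h]
      simpa using ih.1

include hq0 hq1 hqrec ha in
lemma dominance (b c : ℕ → ℕ)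
    (hb0 : b 0 < a 1)
    (hc0 : c 0 < a 1) (hcle : ∀ i, 1 ≤ i → c i ≤ a (i + 1))
    (hccarry : ∀ i, 1 ≤ i → c i = a (i + 1) → c (i - 1) = 0)
    (m j : ℕ) (hmj : m ≤ j) (hcb : c m < b m)
    (heq : ∀ i, m < i → i ≤ j → c i = b i) :
    (∑ i ∈ Finset.range (j + 1), c i * q i) < ∑ i ∈ Finset.range (j + 1), b i * q i := by
  have hsplit : ∀ f : ℕ → ℕ, ∑ i ∈ Finset.range (j + 1), f i
      = (∑ i ∈ Finset.range (m + 1), f i) + ∑ i ∈ Finset.Ico (m + 1) (j + 1), f i := by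
    intro f
    rw [Finset.range_eq_Ico, Finset.range_eq_Ico]
    exact (Finset.sum_Ico_consecutive f (Nat.zero_le _) (by omega)).symm
  rw [hsplit (fun i => c i * q i), hsplit (fun i => b i * q i)]
  have htail : ∑ i ∈ Finset.Ico (m + 1) (j + 1), c i * q i
      = ∑ i ∈ Finset.Ico (m + 1) (j + 1), b i * q i := by
    refine Finset.sum_congr rfl ?_
    intro i hi
    rw [Finset.mem_Ico] at hi
    rw [heq i (by omega) (by omega)]
  rw [htail]
  have hhead : (∑ i ∈ Finset.range (m + 1), c i * q i)
      < ∑ i ∈ Finset.range (m + 1), b i * q i := by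
    match m, hcb with
    | 0, hcb => simpa [hq0] using hcb
    | (k + 1), hcb =>
      have hA := (ostrowski_sum_lt a q hq0 hq1 hqrec ha c hc0 hcle hccarry k).1
      have hqp := qpos a q hq0 hq1 hqrec ha (k + 1)
      have hs : ∑ i ∈ Finset.range (k + 2), c i * q i
          = (∑ i ∈ Finset.range (k + 1), c i * q i) + c (k + 1) * q (k + 1) :=
        Finset.sum_range_succ _ _
      have hs' : ∑ i ∈ Finset.range (k + 2), b i * q i
          = (∑ i ∈ Finset.range (k + 1), b i * q i) + b (k + 1) * q (k + 1) :=
        Finset.sum_range_succ _ _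
      have hmul : (c (k + 1) + 1) * q (k + 1) ≤ b (k + 1) * q (k + 1) :=
        Nat.mul_le_mul_right _ hcb
      have hexp : (c (k + 1) + 1) * q (k + 1)
          = c (k + 1) * q (k + 1) + q (k + 1) := by ring
      have hSb0 : 0 ≤ ∑ i ∈ Finset.range (k + 1), b i * q i := Nat.zero_le _
      rw [hs, hs']
      linarith
  omega

lemma greatest_diff (b c : ℕ → ℕ) (j : ℕ) (h : ¬ ∀ i, i ≤ j → b i = c i) :
    ∃ m, m ≤ j ∧ b m ≠ c m ∧ ∀ i, m < i → i ≤ j → b i = c i := by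
  push_neg at h
  obtain ⟨i0, hi0, hne⟩ := h
  refine ⟨Nat.findGreatest (fun i => b i ≠ c i) j, Nat.findGreatest_le j,
    Nat.findGreatest_spec (P := fun i => b i ≠ c i) hi0 hne, ?_⟩
  intro i hlt hle
  by_contra hne'
  exact Nat.findGreatest_is_greatest (P := fun i => b i ≠ c i) hlt hle hne'

end Aux

/-- Lemma 8.2. Let `α ∈ (0,1)` be irrational with continued
fraction digits `a_i` and convergent denominators `q_i`. Let `(b_i)` and `(c_i)`
be Ostrowski digit sequences, with all `c_i` even and `c_i ≠ 0` at even indices,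
and with `b_i < a_{i+1}` for all `i ≥ 1`. Set `N_j = Σ_{i≤j} b_i q_i` and
`C_j = Σ_{i≤j} c_i q_i`. Then for every `ℓ ≥ 1` the chain conditions
`C_{ℓ−1} < N_{ℓ−1} ≤ N_ℓ < C_ℓ` and `N_{ℓ−1} ≤ C_{ℓ−1} ≤ C_ℓ < N_ℓ` are
characterized in terms of the digit sequences. -/
theorem chain_condition_characterization (α : ℝ) (hirr : Irrational α)
    (h0 : 0 < α) (h1 : α < 1)
    (b c : ℕ → ℕ)
    (hb0 : b 0 < cfDigit α 1) (hble : ∀ i, 1 ≤ i → b i ≤ cfDigit α (i + 1))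
    (hbcarry : ∀ i, 1 ≤ i → b i = cfDigit α (i + 1) → b (i - 1) = 0)
    (hc0 : c 0 < cfDigit α 1) (hcle : ∀ i, 1 ≤ i → c i ≤ cfDigit α (i + 1))
    (hccarry : ∀ i, 1 ≤ i → c i = cfDigit α (i + 1) → c (i - 1) = 0)
    (hceven : ∀ i, Even (c i)) (hcpos : ∀ i, Even i → c i ≠ 0)
    (hblt : ∀ i, 1 ≤ i → b i < cfDigit α (i + 1)) :
    letI NN : ℕ → ℕ := fun j => ∑ i ∈ Finset.range (j + 1), b i * qDen α i
    letI CC : ℕ → ℕ := fun j => ∑ i ∈ Finset.range (j + 1), c i * qDen α i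
    ∀ ℓ : ℕ, 1 ≤ ℓ →
      ((CC (ℓ - 1) < NN (ℓ - 1) ∧ NN (ℓ - 1) ≤ NN ℓ ∧ NN ℓ < CC ℓ) ↔
        (b ℓ < c ℓ ∧ ∃ m, m < ℓ ∧ c m < b m ∧ ∀ i, m < i → i < ℓ → c i = b i)) ∧
      ((NN (ℓ - 1) ≤ CC (ℓ - 1) ∧ CC (ℓ - 1) ≤ CC ℓ ∧ CC ℓ < NN ℓ) ↔
        (c ℓ < b ℓ ∧ ((∀ i, i < ℓ → b i = c i) ∨
          ∃ m, m < ℓ ∧ b m < c m ∧ ∀ i, m < i → i < ℓ → b i = c i))) := by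
  intro ℓ hℓ
  obtain ⟨k, rfl⟩ : ∃ k, ℓ = k + 1 := ⟨ℓ - 1, by omega⟩
  beta_reduce
  simp only [Nat.add_sub_cancel]
  set a : ℕ → ℕ := cfDigit α with ha_def
  set q : ℕ → ℕ := qDen α with hq_def
  have hq0 : q 0 = 1 := rfl
  have hq1 : q 1 = a 1 := rfl
  have hqrec : ∀ j, q (j + 2) = a (j + 2) * q (j + 1) + q j := fun j => rfl
  have ha : ∀ i, 1 ≤ i → 1 ≤ a i := cfDigit_pos α hirr h0 h1
  rw [Finset.sum_range_succ (fun i => b i * q i) (k + 1),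
    Finset.sum_range_succ (fun i => c i * q i) (k + 1)]
  beta_reduce
  set Sb := ∑ i ∈ Finset.range (k + 1), b i * q i with hSb
  set Sc := ∑ i ∈ Finset.range (k + 1), c i * q i with hSc
  have hqp : 1 ≤ q (k + 1) := qpos a q hq0 hq1 hqrec ha (k + 1)
  have hNlt : Sb < q (k + 1) :=
    (ostrowski_sum_lt a q hq0 hq1 hqrec ha b hb0 hble hbcarry k).1
  have hClt : Sc < q (k + 1) :=
    (ostrowski_sum_lt a q hq0 hq1 hqrec ha c hc0 hcle hccarry k).1
  have hdomCN : ∀ m, m ≤ k → c m < b m → (∀ i, m < i → i ≤ k → c i = b i) →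
      Sc < Sb := fun m hm h1' h2' =>
    dominance a q hq0 hq1 hqrec ha b c hb0 hc0 hcle hccarry m k hm h1' h2'
  have hdomNC : ∀ m, m ≤ k → b m < c m → (∀ i, m < i → i ≤ k → b i = c i) →
      Sb < Sc := fun m hm h1' h2' =>
    dominance a q hq0 hq1 hqrec ha c b hc0 hb0 hble hbcarry m k hm h1' h2'
  have heqsum : (∀ i, i ≤ k → b i = c i) → Sb = Sc := by
    intro h
    refine Finset.sum_congr rfl ?_
    intro i hi
    rw [Finset.mem_range] at hi
    rw [h i (by omega)]
  constructor
  · -- part (i)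
    constructor
    · rintro ⟨h1', _, h3'⟩
      have hbc : b (k + 1) < c (k + 1) := by
        by_contra hge
        push_neg at hge
        have : c (k + 1) * q (k + 1) ≤ b (k + 1) * q (k + 1) :=
          Nat.mul_le_mul_right _ hge
        omega
      refine ⟨hbc, ?_⟩
      by_cases hall : ∀ i, i ≤ k → b i = c i
      · exact absurd (heqsum hall) (by omega)
      · obtain ⟨m, hm, hne, heqa⟩ := greatest_diff b c k hall
        rcases Nat.lt_or_ge (c m) (b m) with hlt | hge
        · exact ⟨m, by omega, hlt, fun i hi1 hi2 => (heqa i hi1 (by omega)).symm⟩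
        · have hbm : b m < c m := by omega
          have := hdomNC m hm hbm heqa
          omega
    · rintro ⟨hbc, m, hm, hcb, heqa⟩
      have h1' : Sc < Sb :=
        hdomCN m (by omega) hcb (fun i hi hik => heqa i hi (by omega))
      have hmul : (b (k + 1) + 1) * q (k + 1) ≤ c (k + 1) * q (k + 1) :=
        Nat.mul_le_mul_right _ hbc
      have hexp : (b (k + 1) + 1) * q (k + 1)
          = b (k + 1) * q (k + 1) + q (k + 1) := by ring
      exact ⟨h1', by omega, by omega⟩
  · -- part (ii)
    constructor
    · rintro ⟨h1', _, h3'⟩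
      have hcb : c (k + 1) < b (k + 1) := by
        by_contra hge
        push_neg at hge
        have : b (k + 1) * q (k + 1) ≤ c (k + 1) * q (k + 1) :=
          Nat.mul_le_mul_right _ hge
        omega
      refine ⟨hcb, ?_⟩
      by_cases hall : ∀ i, i ≤ k → b i = c i
      · exact Or.inl fun i hi => hall i (by omega)
      · obtain ⟨m, hm, hne, heqa⟩ := greatest_diff b c k hall
        rcases Nat.lt_or_ge (b m) (c m) with hlt | hge
        · exact Or.inr ⟨m, by omega, hlt, fun i hi1 hi2 => heqa i hi1 (by omega)⟩
        · have hcm : c m < b m := by omega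
          have := hdomCN m hm hcm (fun i hi1 hi2 => (heqa i hi1 hi2).symm)
          omega
    · rintro ⟨hcb, hcase⟩
      have hmul : (c (k + 1) + 1) * q (k + 1) ≤ b (k + 1) * q (k + 1) :=
        Nat.mul_le_mul_right _ hcb
      have hexp : (c (k + 1) + 1) * q (k + 1)
          = c (k + 1) * q (k + 1) + q (k + 1) := by ring
      rcases hcase with hall | ⟨m, hm, hbm, heqa⟩
      · have heq : Sb = Sc := heqsum fun i hi => hall i (by omega)
        exact ⟨by omega, by omega, by omega⟩
      · have h1' : Sb < Sc :=
          hdomNC m (by omega) hbm (fun i hi hik => heqa i hi (by omega))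
        exact ⟨by omega, by omega, by omega⟩
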